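/- Boundedness from the angular-rate MRAC Lyapunov function: let J_S be a symmetric positive-definite 3×3 real matrix with smallest eigenvalue λ_J > 0, K_p a symmetric positive-definite 3×3 matrix, K_ω, L_ω 3×3 matrices with x ↦ ⟪x, J_S(K_ω + L_ω)x⟫ positive semidefinite, Γ_ω a symmetric positive-definite 8×8 matrix, φ_ω : ℝ → ℝ^{8×3} continuous, and suppose e_ω, γ̃ satisfy for all t ≥ 0 the equations J_S ė_ω = −J_S(K_ω + L_ω) e_ω − K_p e_ω − φ_ωᵀ γ̃ and γ̃' = Γ_ω φ_ω e_ω. Then V_ω(t) = (1/2)⟪e_ω, J_S e_ω⟫ + (1/2)⟪γ̃, Γ_ω⁻¹ γ̃⟫ is nonincreasing on [0, ∞); in particular ‖e_ω(t)‖² ≤ (2/λ_J) V_ω(0) for all t ≥ 0, so e_ω and γ̃ are bounded. -/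

import Mathlib

open Matrix

lemma quad_lower {n : Type*} [Fintype n] [DecidableEq n] (A : Matrix n n ℝ)
    (hA : A.IsHermitian) (c : ℝ) (hc : ∀ i, c ≤ hA.eigenvalues i) (x : n → ℝ) :
    c * (x ⬝ᵥ x) ≤ x ⬝ᵥ (A *ᵥ x) := by
  classical
  set b := hA.eigenvectorBasis with hb
  have hdot : ∀ u v : EuclideanSpace ℝ n, (inner ℝ u v : ℝ) = (u : n → ℝ) ⬝ᵥ (v : n → ℝ) := by
    intro u v
    simp [PiLp.inner_apply, dotProduct, RCLike.inner_apply, mul_comm]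
  set v : EuclideanSpace ℝ n := WithLp.toLp 2 x with hv
  have hsum : ∑ i, b.repr v i • (b i : n → ℝ) = x := by
    have := b.sum_repr v
    simpa [WithLp.ofLp_sum, hv] using congrArg (fun w : EuclideanSpace ℝ n => (w : n → ℝ)) this
  have hds : ∀ (w : n → (n → ℝ)), x ⬝ᵥ (∑ i, w i) = ∑ i, x ⬝ᵥ w i := by
    intro w
    simp only [dotProduct, Finset.sum_apply, Finset.mul_sum]
    rw [Finset.sum_comm]
  have hAx : A *ᵥ x = ∑ i, (b.repr v i * hA.eigenvalues i) • (b i : n → ℝ) := by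
    conv_lhs => rw [← hsum]
    rw [show A *ᵥ (∑ i, b.repr v i • (b i : n → ℝ))
        = ∑ i, A *ᵥ (b.repr v i • (b i : n → ℝ)) by
      simpa only [mulVecLin_apply] using map_sum A.mulVecLin _ Finset.univ]
    refine Finset.sum_congr rfl fun i _ => ?_
    rw [mulVec_smul]
    have hm : A *ᵥ (b i : n → ℝ) = hA.eigenvalues i • (b i : n → ℝ) := by
      simpa using hA.mulVec_eigenvectorBasis i
    rw [hm, smul_smul, mul_comm]
  have hxAx : x ⬝ᵥ (A *ᵥ x) = ∑ i, hA.eigenvalues i * (b.repr v i)^2 := by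
    rw [hAx, hds]
    refine Finset.sum_congr rfl fun i _ => ?_
    rw [dotProduct_smul, ← hdot v (b i)]
    have : (inner ℝ v (b i) : ℝ) = b.repr v i := by
      rw [real_inner_comm, ← b.repr_apply_apply]
    rw [this, smul_eq_mul]; ring
  have h2 : ‖v‖^2 = ∑ i, (b.repr v i)^2 := by
    rw [← b.repr.norm_map v, EuclideanSpace.norm_eq,
      Real.sq_sqrt (Finset.sum_nonneg fun i _ => sq_nonneg _)]
    simp [sq_abs]
  have hxx : x ⬝ᵥ x = ∑ i, (b.repr v i)^2 := by
    rw [← hdot v v, real_inner_self_eq_norm_sq, h2]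
  rw [hxAx, hxx, Finset.mul_sum]
  exact Finset.sum_le_sum fun i _ => mul_le_mul_of_nonneg_right (hc i) (sq_nonneg _)

lemma hasDerivAt_bilin {m n : Type*} [Fintype m] [Fintype n] (A : Matrix m n ℝ)
    (u : ℝ → m → ℝ) (w : ℝ → n → ℝ) (du : m → ℝ) (dw : n → ℝ) (t : ℝ)
    (hu : HasDerivAt u du t) (hw : HasDerivAt w dw t) :
    HasDerivAt (fun s => u s ⬝ᵥ (A *ᵥ w s))
      (du ⬝ᵥ (A *ᵥ w t) + u t ⬝ᵥ (A *ᵥ dw)) t := by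
  have hui := hasDerivAt_pi.1 hu
  have hwj := hasDerivAt_pi.1 hw
  have hAwi : ∀ i, HasDerivAt (fun s => (A *ᵥ w s) i) ((A *ᵥ dw) i) t := by
    intro i
    simp only [mulVec, dotProduct]
    exact HasDerivAt.fun_sum fun j _ => (hwj j).const_mul (A i j)
  have : HasDerivAt (fun s => ∑ i, u s i * (A *ᵥ w s) i)
      (∑ i, (du i * (A *ᵥ w t) i + u t i * (A *ᵥ dw) i)) t :=
    HasDerivAt.fun_sum fun i _ => (hui i).mul (hAwi i)
  simpa [dotProduct, Finset.sum_add_distrib] using this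

lemma dotProduct_mulVec_symm {k : Type*} [Fintype k] (A : Matrix k k ℝ)
    (hA : Aᵀ = A) (a b : k → ℝ) : a ⬝ᵥ (A *ᵥ b) = b ⬝ᵥ (A *ᵥ a) := by
  rw [dotProduct_mulVec, ← mulVec_transpose, hA, dotProduct_comm]

/-- Boundedness from the angular-rate MRAC Lyapunov function: `V_ω` is
nonincreasing on `[0, ∞)`, `‖e_ω(t)‖² ≤ (2/λ_J) V_ω(0)` for all `t ≥ 0`, and
`e_ω`, `γ̃` are bounded. -/
theorem angular_rate_mrac_boundedness
    (JS : Matrix (Fin 3) (Fin 3) ℝ) (hJS : JS.PosDef)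
    (lamJ : ℝ) (hlamJ : lamJ = ⨅ i, hJS.1.eigenvalues i) (hlamJpos : 0 < lamJ)
    (Kp : Matrix (Fin 3) (Fin 3) ℝ) (hKp : Kp.PosDef)
    (Kω Lω : Matrix (Fin 3) (Fin 3) ℝ)
    (hsemi : ∀ x : Fin 3 → ℝ, 0 ≤ x ⬝ᵥ ((JS * (Kω + Lω)) *ᵥ x))
    (Γω : Matrix (Fin 8) (Fin 8) ℝ) (hΓω : Γω.PosDef)
    (Φ : ℝ → Matrix (Fin 8) (Fin 3) ℝ)
    (hΦc : ∀ i j, Continuous fun t => Φ t i j)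
    (e : ℝ → Fin 3 → ℝ) (γ : ℝ → Fin 8 → ℝ)
    (de : ℝ → Fin 3 → ℝ) (he : ∀ t ≥ (0:ℝ), HasDerivAt e (de t) t)
    (heq : ∀ t ≥ (0:ℝ), JS *ᵥ de t
        = -(JS *ᵥ ((Kω + Lω) *ᵥ e t)) - Kp *ᵥ e t - (Φ t)ᵀ *ᵥ γ t)
    (hγ : ∀ t ≥ (0:ℝ), HasDerivAt γ (Γω *ᵥ (Φ t *ᵥ e t)) t)
    (V : ℝ → ℝ)
    (hV : V = fun t =>
      (1 / 2) * (e t ⬝ᵥ (JS *ᵥ e t)) + (1 / 2) * (γ t ⬝ᵥ (Γω⁻¹ *ᵥ γ t))) :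
    AntitoneOn V (Set.Ici 0) ∧
    (∀ t ≥ (0:ℝ), e t ⬝ᵥ e t ≤ (2 / lamJ) * V 0) ∧
    (∃ C, ∀ t ≥ (0:ℝ), e t ⬝ᵥ e t ≤ C) ∧
    (∃ C, ∀ t ≥ (0:ℝ), γ t ⬝ᵥ γ t ≤ C) := by
  have hJsym : JSᵀ = JS := by
    rw [← Matrix.conjTranspose_eq_transpose_of_trivial]; exact hJS.1
  have hi := hΓω.isUnit.invertible
  have hmul0 : Γω⁻¹ * Γω = 1 := Matrix.inv_mul_of_invertible Γω
  have hmul0' : Γω * Γω⁻¹ = 1 := Matrix.mul_inv_of_invertible Γω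
  have hΓherm : (Γω⁻¹).IsHermitian := hΓω.1.inv
  have hΓinv : (Γω⁻¹).PosDef := by
    exact hΓω.inv
  have hΓsym : (Γω⁻¹)ᵀ = Γω⁻¹ := by
    rw [← Matrix.conjTranspose_eq_transpose_of_trivial]; exact hΓherm
  have hmul : ∀ w : Fin 8 → ℝ, Γω⁻¹ *ᵥ (Γω *ᵥ w) = w := by
    intro w
    rw [mulVec_mulVec, hmul0, one_mulVec]
  have hKpnn : ∀ x : Fin 3 → ℝ, 0 ≤ x ⬝ᵥ (Kp *ᵥ x) := by
    intro x
    simpa using hKp.posSemidef.re_dotProduct_nonneg x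
  -- the derivative of `V`
  have hD : ∀ t ∈ Set.Ici (0:ℝ), HasDerivAt V
      (-(e t ⬝ᵥ ((JS * (Kω + Lω)) *ᵥ e t)) - e t ⬝ᵥ (Kp *ᵥ e t)) t := by
    intro t ht
    have h1 := hasDerivAt_bilin JS e e (de t) (de t) t (he t ht) (he t ht)
    have h2 := hasDerivAt_bilin Γω⁻¹ γ γ (Γω *ᵥ (Φ t *ᵥ e t)) (Γω *ᵥ (Φ t *ᵥ e t))
      t (hγ t ht) (hγ t ht)
    have h3 := (h1.const_mul ((1:ℝ)/2)).add (h2.const_mul ((1:ℝ)/2))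
    rw [hV]
    convert h3 using 1
    case e'_4 => rfl
    case e'_5 => rfl
    case e'_8 => rfl
    have hs1 := dotProduct_mulVec_symm JS hJsym (de t) (e t)
    have hs2 := dotProduct_mulVec_symm (Γω⁻¹) hΓsym (Γω *ᵥ (Φ t *ᵥ e t)) (γ t)
    have hJde : e t ⬝ᵥ (JS *ᵥ de t)
        = -(e t ⬝ᵥ ((JS * (Kω + Lω)) *ᵥ e t)) - e t ⬝ᵥ (Kp *ᵥ e t)
          - e t ⬝ᵥ ((Φ t)ᵀ *ᵥ γ t) := by
      rw [heq t ht, dotProduct_sub, dotProduct_sub, dotProduct_neg, mulVec_mulVec]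
    have hγterm : γ t ⬝ᵥ (Γω⁻¹ *ᵥ (Γω *ᵥ (Φ t *ᵥ e t)))
        = e t ⬝ᵥ ((Φ t)ᵀ *ᵥ γ t) := by
      rw [hmul, dotProduct_mulVec, ← mulVec_transpose, dotProduct_comm]
    rw [hs1, hs2]
    rw [hγterm] at hs2 ⊢
    linarith [hJde]
  have hanti : AntitoneOn V (Set.Ici 0) := by
    apply antitoneOn_of_deriv_nonpos (convex_Ici 0)
    · exact fun t ht => (hD t ht).continuousAt.continuousWithinAt
    · intro t ht
      rw [interior_Ici] at ht
      exact (hD t (Set.mem_Ici.2 (le_of_lt ht))).differentiableAt.differentiableWithinAt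
    · intro t ht
      rw [interior_Ici] at ht
      rw [(hD t (Set.mem_Ici.2 ht.le)).deriv]
      have h1 := hsemi (e t)
      have h2 := hKpnn (e t)
      linarith
  have hVle : ∀ t ≥ (0:ℝ), V t ≤ V 0 :=
    fun t ht => hanti (Set.self_mem_Ici) ht ht
  have hγnn : ∀ t, 0 ≤ γ t ⬝ᵥ (Γω⁻¹ *ᵥ γ t) := by
    intro t
    simpa using hΓinv.posSemidef.re_dotProduct_nonneg (γ t)
  have hJSnn : ∀ t, 0 ≤ e t ⬝ᵥ (JS *ᵥ e t) := by
    intro t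
    simpa using hJS.posSemidef.re_dotProduct_nonneg (e t)
  have hEJ : ∀ t, lamJ * (e t ⬝ᵥ e t) ≤ e t ⬝ᵥ (JS *ᵥ e t) := by
    intro t
    refine quad_lower JS hJS.1 lamJ (fun i => ?_) (e t)
    rw [hlamJ]
    exact ciInf_le (Finite.bddBelow_range _) i
  have hVt : ∀ t ≥ (0:ℝ), e t ⬝ᵥ (JS *ᵥ e t) ≤ 2 * V 0 := by
    intro t ht
    have h1 := hVle t ht
    have h2 := hγnn t
    rw [hV] at h1 ⊢
    simp only at h1 ⊢
    linarith
  have hEbound : ∀ t ≥ (0:ℝ), e t ⬝ᵥ e t ≤ (2 / lamJ) * V 0 := by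
    intro t ht
    rw [div_mul_eq_mul_div, le_div_iff₀ hlamJpos]
    have := hEJ t
    have := hVt t ht
    nlinarith
  refine ⟨hanti, hEbound, ⟨(2 / lamJ) * V 0, hEbound⟩, ?_⟩
  -- bound for γ via smallest eigenvalue of Γω⁻¹
  obtain ⟨i0, hi0⟩ := Finite.exists_min (hΓinv.1.eigenvalues)
  set μ := ⨅ i, hΓinv.1.eigenvalues i with hμ
  have hμpos : 0 < μ := lt_of_lt_of_le (hΓinv.eigenvalues_pos i0) (le_ciInf hi0)
  have hGb : ∀ t, μ * (γ t ⬝ᵥ γ t) ≤ γ t ⬝ᵥ (Γω⁻¹ *ᵥ γ t) := by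
    intro t
    exact quad_lower _ hΓinv.1 μ (fun i => ciInf_le (Finite.bddBelow_range _) i) (γ t)
  refine ⟨2 * V 0 / μ, fun t ht => ?_⟩
  rw [le_div_iff₀ hμpos]
  have h1 := hVle t ht
  have h2 := hJSnn t
  have h3 := hGb t
  rw [hV] at h1 ⊢
  simp only at h1 ⊢
  nlinarith
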